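/- Let O be a CM order (order with involutive automorphism and positive-definite x ↦ tr(x·x̄)), I = (v) an integral invertible principal ideal, and x ∈ I \ {0} an element minimizing tr(x·x̄) over I \ {0}. Then there exists a nonzero y in v·O⁺ ∪ v·O⁻ (where O⁺ = {a ∈ O : ā = a} and O⁻ = {a ∈ O : ā = −a}) with 0 < tr(y·ȳ) ≤ 2·tr(x·x̄). Moreover v·O⁺ ⊆ I and v·O⁻ ⊆ I. -/

import Mathlib

/-- The trace of the multiplication-by-`a` endomorphism of the order `O`. -/
noncomputable def trform {O : Type*} [CommRing O] (a : O) : ℤ :=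
  LinearMap.trace ℤ O (LinearMap.mulLeft ℤ a)

lemma trform_add {O : Type*} [CommRing O] (a b : O) :
    trform (a + b) = trform a + trform b := by
  unfold trform
  rw [← map_add]
  congr 1
  ext w
  simp [add_mul]

/-- Dimension halving: a minimizer of the norm form on a principal ideal `(v)` of a CM
order yields a nonzero element of `v·O⁺` or `v·O⁻` of at most twice the squared norm. -/
theorem cm_order_short_vector_real_or_imaginary {O : Type*} [CommRing O]
    [Module.Free ℤ O] [Module.Finite ℤ O]
    (σ : O ≃+* O) (hσ : ∀ x : O, σ (σ x) = x)
    (hpos : ∀ x : O, x ≠ 0 → 0 < trform (x * σ x))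
    (v : O) (hv : v ∈ nonZeroDivisors O)
    (x : O) (hxI : x ∈ Ideal.span ({v} : Set O)) (hx0 : x ≠ 0)
    (hmin : ∀ z ∈ Ideal.span ({v} : Set O), z ≠ 0 → trform (x * σ x) ≤ trform (z * σ z)) :
    (∃ y : O, y ≠ 0 ∧
        ((∃ a : O, σ a = a ∧ y = v * a) ∨ (∃ a : O, σ a = -a ∧ y = v * a)) ∧
        0 < trform (y * σ y) ∧ trform (y * σ y) ≤ 2 * trform (x * σ x)) ∧
    (∀ a : O, σ a = a → v * a ∈ Ideal.span ({v} : Set O)) ∧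
    (∀ a : O, σ a = -a → v * a ∈ Ideal.span ({v} : Set O)) := by
  refine ⟨?_, fun a _ => Ideal.mem_span_singleton.mpr ⟨a, rfl⟩,
    fun a _ => Ideal.mem_span_singleton.mpr ⟨a, rfl⟩⟩
  obtain ⟨z, rfl⟩ : ∃ z, x = v * z := Ideal.mem_span_singleton.mp hxI
  have hQx : 0 < trform ((v * z) * σ (v * z)) := hpos _ hx0
  have hvnz : ∀ a : O, a ≠ 0 → v * a ≠ 0 := by
    intro a ha h
    exact ha ((mem_nonZeroDivisors_iff.mp hv).2 a (by rw [mul_comm]; exact h))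
  by_cases h1 : σ z = z
  · exact ⟨v * z, hx0, Or.inl ⟨z, h1, rfl⟩, hQx, by linarith⟩
  by_cases h2 : σ z = -z
  · exact ⟨v * z, hx0, Or.inr ⟨z, h2, rfl⟩, hQx, by linarith⟩
  -- general case
  set a₁ := z + σ z with ha₁
  set a₂ := z - σ z with ha₂
  have ha₁fix : σ a₁ = a₁ := by simp [ha₁, map_add, hσ, add_comm]
  have ha₂anti : σ a₂ = -a₂ := by simp [ha₂, map_sub, hσ]
  have ha₁0 : a₁ ≠ 0 := fun h => h2 (by rw [eq_neg_iff_add_eq_zero, add_comm]; exact h)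
  have ha₂0 : a₂ ≠ 0 := fun h => h1 (sub_eq_zero.mp h).symm
  have hy₁ : v * a₁ ≠ 0 := hvnz _ ha₁0
  have hy₂ : v * a₂ ≠ 0 := hvnz _ ha₂0
  have key : (v * a₁) * σ (v * a₁) + (v * a₂) * σ (v * a₂) =
      ((v * z) * σ (v * z) + (v * z) * σ (v * z)) +
      ((v * z) * σ (v * z) + (v * z) * σ (v * z)) := by
    simp only [ha₁, ha₂, map_mul, map_add, map_sub, hσ]
    ring
  have hsum : trform ((v * a₁) * σ (v * a₁)) + trform ((v * a₂) * σ (v * a₂)) =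
      4 * trform ((v * z) * σ (v * z)) := by
    rw [← trform_add, key]; simp only [trform_add]; ring
  have hQ1 : 0 < trform ((v * a₁) * σ (v * a₁)) := hpos _ hy₁
  have hQ2 : 0 < trform ((v * a₂) * σ (v * a₂)) := hpos _ hy₂
  rcases le_or_gt (trform ((v * a₁) * σ (v * a₁))) (2 * trform ((v * z) * σ (v * z))) with h | h
  · exact ⟨v * a₁, hy₁, Or.inl ⟨a₁, ha₁fix, rfl⟩, hQ1, h⟩
  · exact ⟨v * a₂, hy₂, Or.inr ⟨a₂, ha₂anti, rfl⟩, hQ2, by linarith⟩
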